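/- Let I be a degree-based topological index with coefficients c_{ij} for 1 ≤ i ≤ j ≤ 3, i.e., I(G) = Σ c_{ij} m_{ij}(G). Define c'_{12} = c_{12} − 4c_{22} + 3c_{23}, c'_{13} = c_{13} − 3c_{22} + 2c_{23}, c'_{33} = c_{22} − 2c_{23} + c_{33}, and C_I(n,m) = (6n − 5m)c_{22} + (6m − 6n)c_{23}. Then for every simple connected graph G with maximum degree at most 3, n ≥ 3 vertices, and m edges, I(G) = c'_{12} m_{12} + c'_{13} m_{13} + c'_{33} m_{33} + C_I(n,m). -/

import Mathlib

open scoped Classical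

/-- The number of endpoints (with multiplicity) of an edge of type `(i,j)` having degree `k`. -/
def degCnt (k i j : ℕ) : ℕ := (if i = k then 1 else 0) + (if j = k then 1 else 0)

/-- A set closed under adjacency contains everything reachable from it. -/
lemma walk_closed {V : Type*} {G : SimpleGraph V} {S : Set V}
    (hS : ∀ a b, G.Adj a b → a ∈ S → b ∈ S) {x w : V} (p : G.Walk x w) (hx : x ∈ S) :
    w ∈ S := by
  induction p with
  | nil => exact hx
  | cons h p ih => exact ih (hS _ _ h hx)

/-- The number of edges of `G` whose two endpoints have degrees `i` and `j`. -/
noncomputable def edgeTypeCount {V : Type*} [Fintype V] (G : SimpleGraph V) (i j : ℕ) : ℕ :=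
  (G.edgeSet.toFinset.filter (fun e => Sym2.map (fun v => G.degree v) e = s(i, j))).card

theorem index_reduction {V : Type*} [Fintype V] (G : SimpleGraph V)
    (hconn : G.Connected) (hdeg : ∀ v : V, G.degree v ≤ 3)
    (hn : 3 ≤ Fintype.card V)
    (c12 c13 c22 c23 c33 : ℝ) :
    c12 * edgeTypeCount G 1 2 + c13 * edgeTypeCount G 1 3 + c22 * edgeTypeCount G 2 2 +
        c23 * edgeTypeCount G 2 3 + c33 * edgeTypeCount G 3 3 =
      (c12 - 4 * c22 + 3 * c23) * edgeTypeCount G 1 2 +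
        (c13 - 3 * c22 + 2 * c23) * edgeTypeCount G 1 3 +
        (c22 - 2 * c23 + c33) * edgeTypeCount G 3 3 +
        ((6 * (Fintype.card V : ℝ) - 5 * (G.edgeSet.toFinset.card : ℝ)) * c22 +
          (6 * (G.edgeSet.toFinset.card : ℝ) - 6 * (Fintype.card V : ℝ)) * c23) := by
  set E : Finset (Sym2 V) := G.edgeSet.toFinset with hE
  have hadjE : ∀ {a b : V}, s(a, b) ∈ E → G.Adj a b := by
    intro a b h
    rw [hE, Set.mem_toFinset, SimpleGraph.mem_edgeSet] at h
    exact h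
  -- every vertex has positive degree
  have hpos : ∀ v : V, 1 ≤ G.degree v := by
    intro v
    rw [Nat.one_le_iff_ne_zero, ← Nat.pos_iff_ne_zero, G.degree_pos_iff_exists_adj]
    obtain ⟨w, hw⟩ := Fintype.exists_ne_of_one_lt_card (by omega) v
    obtain ⟨p⟩ := hconn.preconnected v w
    cases p with
    | nil => exact absurd rfl hw.symm
    | cons h _ => exact ⟨_, h⟩
  -- no edge between two degree-one vertices
  have hm11 : edgeTypeCount G 1 1 = 0 := by
    rw [edgeTypeCount, Finset.card_eq_zero, Finset.filter_eq_empty_iff]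
    intro e he
    induction e using Sym2.ind with
    | _ a b =>
      intro hmap
      rw [Sym2.map_pair_eq, Sym2.eq_iff] at hmap
      have hda : G.degree a = 1 := by tauto
      have hdb : G.degree b = 1 := by tauto
      have hab : G.Adj a b := hadjE he
      have huniq : ∀ x y z : V, G.Adj x y → G.Adj x z → G.degree x = 1 → y = z := by
        intro x y z hy hz hx
        have := Finset.card_le_one.mp (le_of_eq hx)
        exact this y ((G.mem_neighborFinset x y).mpr hy) z ((G.mem_neighborFinset x z).mpr hz)
      have hclosed : ∀ x y : V, G.Adj x y → x ∈ ({a, b} : Set V) → y ∈ ({a, b} : Set V) := by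
        intro x y hxy hx
        simp only [Set.mem_insert_iff, Set.mem_singleton_iff] at hx ⊢
        rcases hx with rfl | rfl
        · exact Or.inr (huniq x b y hab hxy hda).symm
        · exact Or.inl (huniq x a y hab.symm hxy hdb).symm
      have hall : ∀ w : V, w = a ∨ w = b := by
        intro w
        obtain ⟨p⟩ := hconn.preconnected a w
        have := walk_closed hclosed p (Set.mem_insert a {b})
        simpa using this
      have hcard : Fintype.card V ≤ 2 := by
        have hsub : (Finset.univ : Finset V) ⊆ {a, b} := by
          intro w _
          rcases hall w with rfl | rfl
          · exact Finset.mem_insert_self _ _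
          · exact Finset.mem_insert_of_mem (Finset.mem_singleton_self _)
        calc Fintype.card V = (Finset.univ : Finset V).card := rfl
          _ ≤ ({a, b} : Finset V).card := Finset.card_le_card hsub
          _ ≤ 2 := (Finset.card_insert_le _ _).trans (by simp)
      omega
  -- ∑ over edges of the number of degree-k endpoints equals n_k * k
  have key : ∀ k : ℕ,
      (∑ e ∈ E, (Finset.univ.filter (fun v => v ∈ e ∧ G.degree v = k)).card)
        = (Finset.univ.filter (fun v => G.degree v = k)).card * k := by
    intro k
    calc (∑ e ∈ E, (Finset.univ.filter (fun v => v ∈ e ∧ G.degree v = k)).card)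
        = ∑ e ∈ E, ∑ v : V, (if v ∈ e ∧ G.degree v = k then 1 else 0) := by
          exact Finset.sum_congr rfl fun e _ => Finset.card_filter _ _
      _ = ∑ v : V, ∑ e ∈ E, (if v ∈ e ∧ G.degree v = k then 1 else 0) := Finset.sum_comm
      _ = ∑ v : V, (if G.degree v = k then k else 0) := by
          refine Finset.sum_congr rfl fun v _ => ?_
          by_cases hv : G.degree v = k
          · simp only [hv, and_true, if_true]
            have h1 : (∑ e ∈ E, if v ∈ e then 1 else 0)
                = (E.filter (fun e => v ∈ e)).card := (Finset.card_filter _ _).symm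
            have h2 : E.filter (fun e => v ∈ e) = G.incidenceFinset v := by
              ext e
              simp [SimpleGraph.mem_incidenceFinset, SimpleGraph.incidenceSet, hE,
                Set.mem_toFinset]
            rw [h1, h2, G.card_incidenceFinset_eq_degree, hv]
          · simp [hv]
      _ = ∑ v ∈ Finset.univ.filter (fun v => G.degree v = k), k := by
          rw [Finset.sum_filter]
      _ = (Finset.univ.filter (fun v => G.degree v = k)).card * k := by
          rw [Finset.sum_const, smul_eq_mul]
  -- per-edge evaluation of the number of degree-k endpoints
  have edge_eval : ∀ k : ℕ, ∀ e ∈ E,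
      (Finset.univ.filter (fun v => v ∈ e ∧ G.degree v = k)).card
        = degCnt k 1 1 * (if Sym2.map (fun v => G.degree v) e = s(1,1) then 1 else 0)
        + degCnt k 1 2 * (if Sym2.map (fun v => G.degree v) e = s(1,2) then 1 else 0)
        + degCnt k 1 3 * (if Sym2.map (fun v => G.degree v) e = s(1,3) then 1 else 0)
        + degCnt k 2 2 * (if Sym2.map (fun v => G.degree v) e = s(2,2) then 1 else 0)
        + degCnt k 2 3 * (if Sym2.map (fun v => G.degree v) e = s(2,3) then 1 else 0)
        + degCnt k 3 3 * (if Sym2.map (fun v => G.degree v) e = s(3,3) then 1 else 0) := by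
    intro k e
    induction e using Sym2.ind with
    | _ a b =>
      intro he
      have hab : a ≠ b := (hadjE he).ne
      have hfil : Finset.univ.filter (fun v => v ∈ (s(a,b) : Sym2 V) ∧ G.degree v = k)
          = ({a, b} : Finset V).filter (fun v => G.degree v = k) := by
        ext v
        simp [Sym2.mem_iff]
      have hcard : (Finset.univ.filter (fun v => v ∈ (s(a,b) : Sym2 V) ∧ G.degree v = k)).card
          = (if G.degree a = k then 1 else 0) + (if G.degree b = k then 1 else 0) := by
        rw [hfil]
        by_cases h1 : G.degree a = k <;> by_cases h2 : G.degree b = k <;>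
          simp [Finset.filter_insert, Finset.filter_singleton, h1, h2, hab]
      rw [hcard, Sym2.map_pair_eq]
      have ha1 := hpos a; have ha3 := hdeg a
      have hb1 := hpos b; have hb3 := hdeg b
      interval_cases h : G.degree a <;> interval_cases h' : G.degree b <;>
        (simp only [Sym2.eq_iff]; norm_num [degCnt]) <;> ring
  -- the summed version
  have hk : ∀ k : ℕ, (Finset.univ.filter (fun v => G.degree v = k)).card * k
      = degCnt k 1 1 * edgeTypeCount G 1 1 + degCnt k 1 2 * edgeTypeCount G 1 2
      + degCnt k 1 3 * edgeTypeCount G 1 3 + degCnt k 2 2 * edgeTypeCount G 2 2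
      + degCnt k 2 3 * edgeTypeCount G 2 3 + degCnt k 3 3 * edgeTypeCount G 3 3 := by
    intro k
    rw [← key k, Finset.sum_congr rfl (edge_eval k)]
    simp only [Finset.sum_add_distrib, ← Finset.mul_sum]
    simp only [edgeTypeCount, Finset.card_filter]
    rfl
  -- the edges partition into the six types
  have hpart : E.card = edgeTypeCount G 1 1 + edgeTypeCount G 1 2 + edgeTypeCount G 1 3
      + edgeTypeCount G 2 2 + edgeTypeCount G 2 3 + edgeTypeCount G 3 3 := by
    have h0 : E.card = ∑ e ∈ E, 1 := by simp
    rw [h0]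
    have hpoint : ∀ e ∈ E, (1 : ℕ)
        = (if Sym2.map (fun v => G.degree v) e = s(1,1) then 1 else 0)
        + (if Sym2.map (fun v => G.degree v) e = s(1,2) then 1 else 0)
        + (if Sym2.map (fun v => G.degree v) e = s(1,3) then 1 else 0)
        + (if Sym2.map (fun v => G.degree v) e = s(2,2) then 1 else 0)
        + (if Sym2.map (fun v => G.degree v) e = s(2,3) then 1 else 0)
        + (if Sym2.map (fun v => G.degree v) e = s(3,3) then 1 else 0) := by
      intro e
      induction e using Sym2.ind with
      | _ a b =>
        intro he
        rw [Sym2.map_pair_eq]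
        have ha1 := hpos a; have ha3 := hdeg a
        have hb1 := hpos b; have hb3 := hdeg b
        interval_cases h : G.degree a <;> interval_cases h' : G.degree b <;>
          (simp only [Sym2.eq_iff]; norm_num)
    rw [Finset.sum_congr rfl hpoint]
    simp only [Finset.sum_add_distrib]
    simp only [edgeTypeCount, Finset.card_filter]
    rfl
  -- vertex count splits by degree
  have hvert : Fintype.card V
      = (Finset.univ.filter (fun v => G.degree v = 1)).card
      + (Finset.univ.filter (fun v => G.degree v = 2)).card
      + (Finset.univ.filter (fun v => G.degree v = 3)).card := by
    have h0 : Fintype.card V = ∑ v : V, 1 := by simp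
    rw [h0]
    have hpoint : ∀ v ∈ (Finset.univ : Finset V), (1 : ℕ)
        = ((if G.degree v = 1 then 1 else 0) + (if G.degree v = 2 then 1 else 0)
          + (if G.degree v = 3 then 1 else 0)) := by
      intro v _
      have h1 := hpos v; have h3 := hdeg v
      split_ifs <;> omega
    rw [Finset.sum_congr rfl hpoint]
    simp only [Finset.sum_add_distrib, Finset.card_filter]
  -- handshake
  have hhand : ∑ v : V, G.degree v = 2 * E.card := by
    have h0 : E = G.edgeFinset := by
      ext e; simp [hE, SimpleGraph.mem_edgeFinset, Set.mem_toFinset]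
    rw [h0, G.sum_degrees_eq_twice_card_edges]
  have hdegsum : ∑ v : V, G.degree v
      = (Finset.univ.filter (fun v => G.degree v = 1)).card * 1
      + (Finset.univ.filter (fun v => G.degree v = 2)).card * 2
      + (Finset.univ.filter (fun v => G.degree v = 3)).card * 3 := by
    have hpoint : ∀ v ∈ (Finset.univ : Finset V), G.degree v
        = (1 * (if G.degree v = 1 then 1 else 0) + 2 * (if G.degree v = 2 then 1 else 0)
          + 3 * (if G.degree v = 3 then 1 else 0)) := by
      intro v _
      have h1 := hpos v; have h3 := hdeg v
      split_ifs <;> omega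
    rw [Finset.sum_congr rfl hpoint]
    simp only [Finset.sum_add_distrib, ← Finset.mul_sum, Finset.card_filter]
    ring
  have e3 : 2 * E.card
      = (Finset.univ.filter (fun v => G.degree v = 1)).card * 1
      + (Finset.univ.filter (fun v => G.degree v = 2)).card * 2
      + (Finset.univ.filter (fun v => G.degree v = 3)).card * 3 := by
    rw [← hhand, hdegsum]
  have e4 := hk 1
  have e5 := hk 2
  have e6 := hk 3
  norm_num [degCnt] at e3 e4 e5 e6
  rw [hm11] at e4
  have e4' : (Finset.univ.filter (fun v => G.degree v = 1)).card
      = edgeTypeCount G 1 2 + edgeTypeCount G 1 3 := by omega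
  have hpart' : E.card = edgeTypeCount G 1 2 + edgeTypeCount G 1 3
      + edgeTypeCount G 2 2 + edgeTypeCount G 2 3 + edgeTypeCount G 3 3 := by omega
  -- now pass to the reals
  set n1 := (Finset.univ.filter (fun v => G.degree v = 1)).card
  set n2 := (Finset.univ.filter (fun v => G.degree v = 2)).card
  set n3 := (Finset.univ.filter (fun v => G.degree v = 3)).card
  have R3 : 2 * (E.card : ℝ) = n1 + n2 * 2 + n3 * 3 := by exact_mod_cast e3
  have R4 : (n1 : ℝ) = edgeTypeCount G 1 2 + edgeTypeCount G 1 3 := by exact_mod_cast e4'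
  have R5 : (n2 : ℝ) * 2 = edgeTypeCount G 1 2 + 2 * edgeTypeCount G 2 2
      + edgeTypeCount G 2 3 := by exact_mod_cast e5
  have R6 : (n3 : ℝ) * 3 = edgeTypeCount G 1 3 + edgeTypeCount G 2 3
      + 2 * edgeTypeCount G 3 3 := by exact_mod_cast e6
  have Rpart : (E.card : ℝ) = edgeTypeCount G 1 2 + edgeTypeCount G 1 3
      + edgeTypeCount G 2 2 + edgeTypeCount G 2 3 + edgeTypeCount G 3 3 := by
    exact_mod_cast hpart'
  have Rvert : (Fintype.card V : ℝ) = n1 + n2 + n3 := by exact_mod_cast hvert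
  have h22 : (edgeTypeCount G 2 2 : ℝ)
      = 6 * Fintype.card V - 5 * E.card - 4 * edgeTypeCount G 1 2
        - 3 * edgeTypeCount G 1 3 + edgeTypeCount G 3 3 := by linarith
  have h23 : (edgeTypeCount G 2 3 : ℝ)
      = 6 * E.card - 6 * Fintype.card V + 3 * edgeTypeCount G 1 2
        + 2 * edgeTypeCount G 1 3 - 2 * edgeTypeCount G 3 3 := by linarith
  rw [h22, h23]
  ring
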